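/- Let c : ℝ → ℝ be continuous and suppose that the function τ ↦ c(τ)·exp(−τ) is strictly increasing on [0,∞) and satisfies c(τ)·exp(−τ) > 1 for all τ ≥ 0. Then for every t ≥ 0 the function τ ↦ 1/c(τ) is integrable on the interval (t, ∞) and ∫_{(t,∞)} 1/c(τ) dτ ≤ 1/c(t). -/

import Mathlib

open MeasureTheory Filter Set

/-- Key integral estimate (equation (intc)) in the proof of existence of admissible
rescaling functions: if `τ ↦ c τ * exp (-τ)` is strictly increasing on `[0,∞)` and `> 1`
there, then for every `t ≥ 0` the function `1 / c` is integrable on `(t, ∞)` and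
`∫_{(t,∞)} 1 / c τ dτ ≤ 1 / c t`. -/
theorem background_cohomology_integral_estimate
    (c : ℝ → ℝ) (hc : Continuous c)
    (hmono : StrictMonoOn (fun τ => c τ * Real.exp (-τ)) (Set.Ici (0 : ℝ)))
    (hgt : ∀ τ ≥ (0 : ℝ), 1 < c τ * Real.exp (-τ)) :
    ∀ t ≥ (0 : ℝ),
      IntegrableOn (fun τ => 1 / c τ) (Set.Ioi t) ∧
      (∫ τ in Set.Ioi t, 1 / c τ) ≤ 1 / c t := by
  intro t ht
  have hcpos : ∀ τ ≥ (0 : ℝ), 0 < c τ := by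
    intro τ hτ
    have h1 := hgt τ hτ
    nlinarith [Real.exp_pos (-τ)]
  have hct : 0 < c t := hcpos t ht
  set g : ℝ → ℝ := fun τ => Real.exp (-τ) / (c t * Real.exp (-t)) with hg
  have hbound : ∀ τ ∈ Set.Ioi t, 1 / c τ ≤ g τ := by
    intro τ hτ
    have hτ0 : (0 : ℝ) ≤ τ := le_trans ht (le_of_lt hτ)
    have hmle : c t * Real.exp (-t) ≤ c τ * Real.exp (-τ) :=
      le_of_lt (hmono ht hτ0 hτ)
    have hcp : 0 < c τ := hcpos τ hτ0
    have hpos : 0 < c t * Real.exp (-t) := mul_pos hct (Real.exp_pos _)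
    rw [hg]
    rw [div_le_div_iff₀ hcp hpos]
    calc 1 * (c t * Real.exp (-t)) = c t * Real.exp (-t) := one_mul _
      _ ≤ c τ * Real.exp (-τ) := hmle
      _ = Real.exp (-τ) * c τ := mul_comm _ _
  have hgint : IntegrableOn g (Set.Ioi t) := by
    have : IntegrableOn (fun τ => Real.exp (-τ)) (Set.Ioi t) := by
      simpa using exp_neg_integrableOn_Ioi t one_pos
    simpa [hg, div_eq_mul_inv, IntegrableOn] using this.mul_const (c t * Real.exp (-t))⁻¹
  have hfmeas : AEStronglyMeasurable (fun τ => 1 / c τ)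
      (volume.restrict (Set.Ioi t)) :=
    (measurable_const.div hc.measurable).aestronglyMeasurable
  have hfint : IntegrableOn (fun τ => 1 / c τ) (Set.Ioi t) := by
    refine hgint.mono' hfmeas ?_
    filter_upwards [ae_restrict_mem measurableSet_Ioi] with τ hτ
    have hτ0 : (0 : ℝ) ≤ τ := le_trans ht (le_of_lt hτ)
    have hcp : 0 < c τ := hcpos τ hτ0
    rw [Real.norm_eq_abs, abs_of_nonneg (by positivity)]
    exact hbound τ hτ
  refine ⟨hfint, ?_⟩
  have hle : (∫ τ in Set.Ioi t, 1 / c τ) ≤ ∫ τ in Set.Ioi t, g τ :=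
    setIntegral_mono_on hfint hgint measurableSet_Ioi hbound
  have hgval : (∫ τ in Set.Ioi t, g τ) = 1 / c t := by
    rw [hg]
    rw [show (fun τ => Real.exp (-τ) / (c t * Real.exp (-t)))
        = fun τ => Real.exp (-τ) * (c t * Real.exp (-t))⁻¹ by
          funext τ; rw [div_eq_mul_inv]]
    rw [integral_mul_const, integral_exp_neg_Ioi]
    field_simp
  linarith [hle, hgval.le, hgval.ge]
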